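/- Well-posedness of the mixed Dirichlet–Neumann boundary value problem: Let (V,E,c) be a finite connected network with a partition V = I ⊔ L ⊔ R ⊔ N where L ∪ R is nonempty, no two vertices of B = L ∪ R ∪ N are adjacent, and every vertex of B is adjacent to some vertex of I. Then for every k > 0 there exists a unique g : V → ℝ satisfying g = k on R, g = 0 on L, Δg(x) = 0 for all x ∈ I, and (∂g/∂n)(I)(x) = 0 for all x ∈ N. -/
import Mathlib


open Finset

variable {V : Type*}

/-- The combinatorial Laplacian of `u` at `x` in a network with conductance `c`. -/
noncomputable def netLap [Fintype V] (G : SimpleGraph V) [DecidableRel G.Adj]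
    (c : V → V → ℝ) (u : V → ℝ) (x : V) : ℝ :=
  ∑ y ∈ G.neighborFinset x, c x y * (u x - u y)

/-- The normal derivative of `u` at `x` with respect to the set `F`. -/
noncomputable def netNormalDeriv [Fintype V] [DecidableEq V] (G : SimpleGraph V)
    [DecidableRel G.Adj] (c : V → V → ℝ) (F : Finset V) (u : V → ℝ) (x : V) : ℝ :=
  ∑ y ∈ (G.neighborFinset x).filter (· ∈ F), c x y * (u x - u y)

/-- The vertex boundary `δF` of `F`: vertices outside `F` adjacent to some vertex of `F`. -/
def netVertexBoundary [Fintype V] [DecidableEq V] (G : SimpleGraph V) [DecidableRel G.Adj]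
    (F : Finset V) : Finset V :=
  univ.filter fun x => x ∉ F ∧ ∃ y ∈ F, G.Adj x y

lemma netLap_eq_sum_univ [Fintype V] (G : SimpleGraph V) [DecidableRel G.Adj]
    (c : V → V → ℝ) (u : V → ℝ) (x : V) :
    netLap G c u x = ∑ y, if G.Adj x y then c x y * (u x - u y) else 0 := by
  rw [netLap, SimpleGraph.neighborFinset_eq_filter, sum_filter]

lemma netLap_add [Fintype V] (G : SimpleGraph V) [DecidableRel G.Adj]
    (c : V → V → ℝ) (u v : V → ℝ) (x : V) :
    netLap G c (u + v) x = netLap G c u x + netLap G c v x := by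
  simp only [netLap, Pi.add_apply, ← Finset.sum_add_distrib]
  exact Finset.sum_congr rfl fun y _ => by ring

lemma netLap_smul [Fintype V] (G : SimpleGraph V) [DecidableRel G.Adj]
    (c : V → V → ℝ) (a : ℝ) (u : V → ℝ) (x : V) :
    netLap G c (a • u) x = a * netLap G c u x := by
  simp only [netLap, Pi.smul_apply, smul_eq_mul, Finset.mul_sum]
  exact Finset.sum_congr rfl fun y _ => by ring

lemma eq_on_adj_of_energy [Fintype V] (G : SimpleGraph V) [DecidableRel G.Adj]
    (c : V → V → ℝ) (hsymm : ∀ x y, c x y = c y x)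
    (hpos : ∀ x y, G.Adj x y → 0 < c x y) (u : V → ℝ)
    (h : ∀ x, u x * netLap G c u x = 0) :
    ∀ x y, G.Adj x y → u x = u y := by
  have hT1 : ∑ x, ∑ y, (if G.Adj x y then c x y * u x * (u x - u y) else 0) = 0 := by
    have key : ∀ x : V, ∑ y, (if G.Adj x y then c x y * u x * (u x - u y) else 0)
        = u x * netLap G c u x := by
      intro x
      rw [netLap_eq_sum_univ, Finset.mul_sum]
      exact Finset.sum_congr rfl fun y _ => by split <;> ring
    simp [key, h]
  have hT2 : ∑ x, ∑ y, (if G.Adj x y then c x y * u y * (u y - u x) else 0) = 0 := by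
    have e : ∑ x, ∑ y, (if G.Adj x y then c x y * u y * (u y - u x) else 0)
        = ∑ x, ∑ y, (if G.Adj x y then c x y * u x * (u x - u y) else 0) := by
      rw [Finset.sum_comm]
      refine Finset.sum_congr rfl fun y _ => Finset.sum_congr rfl fun x _ => ?_
      by_cases hadj : G.Adj x y
      · rw [if_pos hadj, if_pos hadj.symm, hsymm y x]
      · rw [if_neg hadj, if_neg (fun h' => hadj h'.symm)]
    rw [e]; exact hT1
  have hS : ∑ x, ∑ y, (if G.Adj x y then c x y * (u x - u y) ^ 2 else 0) = 0 := by
    have : ∑ x, ∑ y, (if G.Adj x y then c x y * (u x - u y) ^ 2 else 0)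
        = (∑ x, ∑ y, (if G.Adj x y then c x y * u x * (u x - u y) else 0))
          + (∑ x, ∑ y, (if G.Adj x y then c x y * u y * (u y - u x) else 0)) := by
      rw [← Finset.sum_add_distrib]
      refine Finset.sum_congr rfl fun x _ => ?_
      rw [← Finset.sum_add_distrib]
      refine Finset.sum_congr rfl fun y _ => ?_
      split <;> ring
    rw [this, hT1, hT2, add_zero]
  intro x y hadj
  have hnn : ∀ a ∈ (univ : Finset V), ∀ b ∈ (univ : Finset V),
      0 ≤ (if G.Adj a b then c a b * (u a - u b) ^ 2 else 0) := by
    intro a _ b _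
    split
    · have := hpos a b ‹_›
      positivity
    · exact le_refl _
  have h1 := (Finset.sum_eq_zero_iff_of_nonneg
    (fun a ha => Finset.sum_nonneg (fun b hb => hnn a ha b hb))).mp hS x (mem_univ x)
  have h2 := (Finset.sum_eq_zero_iff_of_nonneg (fun b hb => hnn x (mem_univ x) b hb)).mp
    h1 y (mem_univ y)
  rw [if_pos hadj] at h2
  have hc := hpos x y hadj
  have hsq : (u x - u y) ^ 2 = 0 := by
    rcases mul_eq_zero.mp h2 with h' | h'
    · exact absurd h' hc.ne'
    · exact h'
  have := pow_eq_zero_iff (n := 2) (by norm_num) |>.mp hsq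
  linarith

lemma const_of_adj_eq {G : SimpleGraph V} (hconn : G.Connected) (u : V → ℝ)
    (h : ∀ x y, G.Adj x y → u x = u y) : ∀ x y, u x = u y := by
  have key : ∀ {x y : V}, G.Walk x y → u x = u y := by
    intro x y w
    induction w with
    | nil => rfl
    | cons a p ih => exact (h _ _ a).trans ih
  intro x y
  obtain ⟨w⟩ := hconn.preconnected x y
  exact key w

/-- Well-posedness of the mixed Dirichlet–Neumann boundary value problem: for every
`k > 0` there is a unique solution `g`. -/
theorem dn_bvp_well_posedness [Fintype V] [DecidableEq V]
    (G : SimpleGraph V) [DecidableRel G.Adj] (c : V → V → ℝ)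
    (hsymm : ∀ x y, c x y = c y x)
    (hpos : ∀ x y, G.Adj x y → 0 < c x y)
    (hzero : ∀ x y, ¬ G.Adj x y → c x y = 0)
    (hconn : G.Connected)
    (I L R N : Finset V)
    (hLRne : (L ∪ R).Nonempty)
    (hIL : Disjoint I L) (hIR : Disjoint I R) (hIN : Disjoint I N)
    (hLR : Disjoint L R) (hLN : Disjoint L N) (hRN : Disjoint R N)
    (hcover : I ∪ L ∪ R ∪ N = univ)
    (hbdry_nonadj : ∀ x ∈ L ∪ R ∪ N, ∀ y ∈ L ∪ R ∪ N, ¬ G.Adj x y)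
    (hbdry_adj : ∀ x ∈ L ∪ R ∪ N, ∃ y ∈ I, G.Adj x y) :
    ∀ k : ℝ, 0 < k →
      ∃! g : V → ℝ, (∀ x ∈ R, g x = k) ∧ (∀ x ∈ L, g x = 0)
        ∧ (∀ x ∈ I, netLap G c g x = 0)
        ∧ (∀ x ∈ N, netNormalDeriv G c I g x = 0) := by
  intro k hk
  classical
  -- for x ∈ N, the normal derivative w.r.t. I equals the Laplacian
  have hNlap : ∀ (g : V → ℝ), ∀ x ∈ N, netNormalDeriv G c I g x = netLap G c g x := by
    intro g x hxN
    rw [netNormalDeriv, netLap, Finset.filter_true_of_mem]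
    intro y hy
    rw [SimpleGraph.mem_neighborFinset] at hy
    have hyuniv : y ∈ I ∪ L ∪ R ∪ N := by rw [hcover]; exact mem_univ y
    have hxB : x ∈ L ∪ R ∪ N := mem_union_right _ hxN
    rcases mem_union.mp hyuniv with h' | h'
    · rcases mem_union.mp h' with h'' | h''
      · rcases mem_union.mp h'' with h3 | h3
        · exact h3
        · exact absurd hy (hbdry_nonadj x hxB y (mem_union_left _ (mem_union_left _ h3)))
      · exact absurd hy (hbdry_nonadj x hxB y (mem_union_left _ (mem_union_right _ h'')))
    · exact absurd hy (hbdry_nonadj x hxB y (mem_union_right _ h'))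
  -- the linear operator
  let A : (V → ℝ) →ₗ[ℝ] (V → ℝ) :=
    { toFun := fun u x => if x ∈ L ∪ R then u x else netLap G c u x
      map_add' := fun u v => funext fun x => by
        by_cases hx : x ∈ L ∪ R
        · simp only [Pi.add_apply, if_pos hx]
        · simp only [Pi.add_apply, if_neg hx, netLap_add]
      map_smul' := fun a u => funext fun x => by
        by_cases hx : x ∈ L ∪ R
        · simp only [Pi.smul_apply, smul_eq_mul, RingHom.id_apply, if_pos hx]
        · simp only [Pi.smul_apply, smul_eq_mul, RingHom.id_apply, if_neg hx, netLap_smul]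
        }
  have hAapp : ∀ (u : V → ℝ) (x : V),
      A u x = if x ∈ L ∪ R then u x else netLap G c u x := fun _ _ => rfl
  -- injectivity
  have hAinj : Function.Injective A := by
    rw [injective_iff_map_eq_zero]
    intro u hu
    have hu' : ∀ x, (if x ∈ L ∪ R then u x else netLap G c u x) = 0 := by
      intro x; exact congrFun hu x
    have henergy : ∀ x, u x * netLap G c u x = 0 := by
      intro x
      by_cases hx : x ∈ L ∪ R
      · have := hu' x; rw [if_pos hx] at this; rw [this, zero_mul]
      · have := hu' x; rw [if_neg hx] at this; rw [this, mul_zero]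
    have hadj := eq_on_adj_of_energy G c hsymm hpos u henergy
    have hconst := const_of_adj_eq hconn u hadj
    obtain ⟨x0, hx0⟩ := hLRne
    have hx0z : u x0 = 0 := by have := hu' x0; rwa [if_pos hx0] at this
    funext y
    rw [show u y = u x0 from hconst y x0, hx0z]; rfl
  -- surjectivity
  have hAsurj : Function.Surjective A :=
    (LinearMap.injective_iff_surjective).mp hAinj
  set b : V → ℝ := fun x => if x ∈ R then k else 0 with hb
  obtain ⟨g, hg⟩ := hAsurj b
  -- every solution maps to b
  have hbackward : ∀ g' : V → ℝ,
      ((∀ x ∈ R, g' x = k) ∧ (∀ x ∈ L, g' x = 0)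
        ∧ (∀ x ∈ I, netLap G c g' x = 0)
        ∧ (∀ x ∈ N, netNormalDeriv G c I g' x = 0)) → A g' = b := by
    rintro g' ⟨hR, hL, hI, hN⟩
    funext x
    rw [hAapp]
    by_cases hx : x ∈ L ∪ R
    · rcases mem_union.mp hx with h' | h'
      · rw [if_pos hx, hL x h', hb]
        simp [Finset.disjoint_left.mp hLR h']
      · rw [if_pos hx, hR x h', hb]; simp [h']
    · rw [if_neg hx]
      have hxnR : x ∉ R := fun h' => hx (mem_union_right _ h')
      have hxuniv : x ∈ I ∪ L ∪ R ∪ N := by rw [hcover]; exact mem_univ x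
      have hbx : b x = 0 := by simp [hb, hxnR]
      rw [hbx]
      rcases mem_union.mp hxuniv with h' | h'
      · rcases mem_union.mp h' with h'' | h''
        · rcases mem_union.mp h'' with h3 | h3
          · exact hI x h3
          · exact absurd (mem_union_left _ h3) hx
        · exact absurd (mem_union_right _ h'') hx
      · rw [← hNlap g' x h']; exact hN x h'
  -- g is a solution
  have hgsol : (∀ x ∈ R, g x = k) ∧ (∀ x ∈ L, g x = 0)
      ∧ (∀ x ∈ I, netLap G c g x = 0)
      ∧ (∀ x ∈ N, netNormalDeriv G c I g x = 0) := by
    have hg' : ∀ x, (if x ∈ L ∪ R then g x else netLap G c g x) = b x := by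
      intro x; exact congrFun hg x
    refine ⟨?_, ?_, ?_, ?_⟩
    · intro x hx
      have := hg' x
      rw [if_pos (mem_union_right _ hx)] at this
      rw [this, hb]; simp [hx]
    · intro x hx
      have := hg' x
      rw [if_pos (mem_union_left _ hx)] at this
      rw [this, hb]; simp [Finset.disjoint_left.mp hLR hx]
    · intro x hx
      have hxn : x ∉ L ∪ R := by
        intro h'
        rcases mem_union.mp h' with h'' | h''
        · exact Finset.disjoint_left.mp hIL hx h''
        · exact Finset.disjoint_left.mp hIR hx h''
      have := hg' x
      rw [if_neg hxn] at this
      rw [this]; simp only [hb]; rw [if_neg (fun h' => hxn (mem_union_right _ h'))]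
    · intro x hx
      have hxn : x ∉ L ∪ R := by
        intro h'
        rcases mem_union.mp h' with h'' | h''
        · exact Finset.disjoint_left.mp hLN.symm hx h''
        · exact Finset.disjoint_left.mp hRN.symm hx h''
      have := hg' x
      rw [if_neg hxn] at this
      rw [hNlap g x hx, this]; simp only [hb]
      rw [if_neg (fun h' => hxn (mem_union_right _ h'))]
  exact ⟨g, hgsol, fun g' hg' => hAinj ((hbackward g' hg').trans hg.symm)⟩
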